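/- Separation of signal under the sparse eigenvalue condition (equation (schur) in the proof of Lemma A2(d)): Let U be an n×p real matrix, let ξ, ξ* ⊆ {1, …, p}, and suppose λ_min(U_{ξ∪ξ*}ᵀ U_{ξ∪ξ*}) ≥ c for some c > 0 (in particular U_{ξ∪ξ*} has full column rank). Let P_ξ = U_ξ U_ξ† denote the orthogonal projection onto the column space of U_ξ. Then for every vector β supported on ξ* (i.e. β ∈ ℝ^p with β_j = 0 for j ∉ ξ*), ‖(I − P_ξ) U β‖² ≥ c · Σ_{j ∈ ξ* \ ξ} β_j². -/

import Mathlib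

open MeasureTheory Matrix

/-- Frobenius norm of a real matrix. -/
noncomputable def frobNorm {m n : Type*} [Fintype m] [Fintype n] (A : Matrix m n ℝ) : ℝ :=
  Real.sqrt (∑ i, ∑ j, (A i j) ^ 2)

/-- ℓ2 operator norm (largest singular value) of a real matrix. -/
noncomputable def opNorm {m n : Type*} [Fintype m] [Fintype n] [DecidableEq n]
    (A : Matrix m n ℝ) : ℝ :=
  ‖LinearMap.toContinuousLinearMap (Matrix.toEuclideanLin A)‖

/-- Entrywise maximum absolute value of a real matrix. -/
noncomputable def maxNorm {m n : Type*} [Fintype m] [Fintype n] (A : Matrix m n ℝ) : ℝ :=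
  ⨆ i, ⨆ j, |A i j|

/-- Smallest eigenvalue of a real symmetric matrix, via the Rayleigh quotient
(infimum of the quadratic form over the unit sphere). -/
noncomputable def lambdaMin {n : Type*} [Fintype n] (A : Matrix n n ℝ) : ℝ :=
  ⨅ x : {x : n → ℝ // ∑ i, x i ^ 2 = 1}, ∑ i, ∑ j, x.1 i * A i j * x.1 j

/-- Largest eigenvalue of a real symmetric matrix, via the Rayleigh quotient
(supremum of the quadratic form over the unit sphere). -/
noncomputable def lambdaMax {n : Type*} [Fintype n] (A : Matrix n n ℝ) : ℝ :=
  ⨆ x : {x : n → ℝ // ∑ i, x i ^ 2 = 1}, ∑ i, ∑ j, x.1 i * A i j * x.1 j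

/-- Submatrix of `U` assembling the columns indexed by the finite set `ξ`. -/
def colSub {n p : ℕ} (U : Matrix (Fin n) (Fin p) ℝ) (ξ : Finset (Fin p)) :
    Matrix (Fin n) {j : Fin p // j ∈ ξ} ℝ :=
  Matrix.of fun i j => U i j.1

/-- separation of signal under the sparse eigenvalue condition.
If `λ_min(U_{ξ∪ξ*}ᵀ U_{ξ∪ξ*}) ≥ c > 0` and `P_ξ = U_ξ (U_ξᵀU_ξ)⁻¹ U_ξᵀ` is the
orthogonal projection onto the column space of `U_ξ`, then for every `β` supported on
`ξ*`, `‖(I - P_ξ) U β‖² ≥ c ⬝ ∑_{j ∈ ξ* \ ξ} β_j²`. -/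
lemma quad_gram {k m : Type*} [Fintype k] [Fintype m] (M : Matrix m k ℝ) (x : k → ℝ) :
    ∑ i, ∑ j, x i * (Mᵀ * M) i j * x j = ∑ i, ((M *ᵥ x) i) ^ 2 := by
  simp only [Matrix.mul_apply, Matrix.mulVec, dotProduct, Matrix.transpose_apply,
    Finset.mul_sum, Finset.sum_mul, sq]
  trans (∑ i : k, ∑ l : m, ∑ j : k, x i * (M l i * M l j) * x j)
  · exact Finset.sum_congr rfl fun i _ => by rw [Finset.sum_comm]
  trans (∑ l : m, ∑ i : k, ∑ j : k, x i * (M l i * M l j) * x j)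
  · rw [Finset.sum_comm]
  exact Finset.sum_congr rfl fun l _ => Finset.sum_congr rfl fun i _ =>
    Finset.sum_congr rfl fun j _ => by ring

lemma lambdaMin_le_quad {k : Type*} [Fintype k] (A : Matrix k k ℝ) {c : ℝ} (hc : 0 < c)
    (h : c ≤ lambdaMin A) (x : k → ℝ) :
    c * ∑ i, x i ^ 2 ≤ ∑ i, ∑ j, x i * A i j * x j := by
  have key : ∀ y : k → ℝ, (∑ i, y i ^ 2 = 1) → c ≤ ∑ i, ∑ j, y i * A i j * y j := by
    intro y hy
    by_cases hb : BddBelow (Set.range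
        (fun z : {z : k → ℝ // ∑ i, z i ^ 2 = 1} => ∑ i, ∑ j, z.1 i * A i j * z.1 j))
    · exact le_trans h (ciInf_le hb ⟨y, hy⟩)
    · exact absurd (h.trans_eq (Real.iInf_of_not_bddBelow hb)) (not_le.2 hc)
  rcases eq_or_ne (∑ i, x i ^ 2) 0 with hs | hs
  · have hx : ∀ i, x i = 0 := by
      intro i
      have := (Finset.sum_eq_zero_iff_of_nonneg (fun i _ => sq_nonneg (x i))).1 hs i
        (Finset.mem_univ i)
      exact pow_eq_zero_iff (by norm_num) |>.1 this
    simp [hx, hs]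
  · have hpos : 0 < ∑ i, x i ^ 2 :=
      lt_of_le_of_ne (Finset.sum_nonneg fun i _ => sq_nonneg (x i)) (Ne.symm hs)
    set s := ∑ i, x i ^ 2 with hsdef
    set t := Real.sqrt s with ht
    have ht2 : t ^ 2 = s := Real.sq_sqrt hpos.le
    have ht0 : 0 < t := Real.sqrt_pos.2 hpos
    have hy : ∑ i, (x i / t) ^ 2 = 1 := by
      simp only [div_pow, ht2]
      rw [← Finset.sum_div, ← hsdef, div_self hs]
    have hq : ∑ i, ∑ j, (x i / t) * A i j * (x j / t)
        = (∑ i, ∑ j, x i * A i j * x j) / s := by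
      rw [Finset.sum_div]
      apply Finset.sum_congr rfl; intro i _
      rw [Finset.sum_div]
      apply Finset.sum_congr rfl; intro j _
      rw [← ht2]; field_simp
    have := key _ hy
    rw [hq, le_div_iff₀ hpos] at this
    linarith [this]

theorem signal_separation_sparse_eigenvalue
    (n p : ℕ) (U : Matrix (Fin n) (Fin p) ℝ) (ξ ξstar : Finset (Fin p))
    (c : ℝ) (hc : 0 < c)
    (hmin : c ≤ lambdaMin ((colSub U (ξ ∪ ξstar))ᵀ * colSub U (ξ ∪ ξstar)))
    (β : Fin p → ℝ) (hβ : ∀ j ∉ ξstar, β j = 0) :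
    c * ∑ j ∈ ξstar \ ξ, β j ^ 2 ≤
      ∑ i, (((1 - colSub U ξ * ((colSub U ξ)ᵀ * colSub U ξ)⁻¹ * (colSub U ξ)ᵀ) *ᵥ
        (U *ᵥ β)) i) ^ 2 := by
  classical
  set v : {j : Fin p // j ∈ ξ} → ℝ :=
    (((colSub U ξ)ᵀ * colSub U ξ)⁻¹ * (colSub U ξ)ᵀ) *ᵥ (U *ᵥ β) with hv
  set D : Fin p → ℝ := fun j => β j - if h : j ∈ ξ then v ⟨j, h⟩ else 0 with hD
  set δ : {j : Fin p // j ∈ ξ ∪ ξstar} → ℝ := fun j => D j.1 with hδ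
  have hvec : ∀ i, ((1 - colSub U ξ * ((colSub U ξ)ᵀ * colSub U ξ)⁻¹ * (colSub U ξ)ᵀ) *ᵥ
      (U *ᵥ β)) i = (colSub U (ξ ∪ ξstar) *ᵥ δ) i := by
    intro i
    have hA : ∑ j ∈ ξ ∪ ξstar, U i j * β j = (U *ᵥ β) i := by
      rw [Matrix.mulVec, dotProduct]
      apply Finset.sum_subset (Finset.subset_univ _)
      intro j _ hj
      rw [hβ j (fun hm => hj (Finset.mem_union_right _ hm)), mul_zero]
    have hB : ∑ j ∈ ξ ∪ ξstar, U i j * (if h : j ∈ ξ then v ⟨j, h⟩ else 0)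
        = (colSub U ξ *ᵥ v) i := by
      rw [Matrix.mulVec, dotProduct]
      rw [Finset.univ_eq_attach,
        ← Finset.sum_subset (Finset.subset_union_left (s₂ := ξstar))
          (fun j _ hj => by rw [dif_neg hj, mul_zero]),
        ← Finset.sum_attach ξ (fun j => U i j * (if h : j ∈ ξ then v ⟨j, h⟩ else 0))]
      apply Finset.sum_congr rfl
      intro j _
      rw [dif_pos j.2]
      rfl
    have hR : (colSub U (ξ ∪ ξstar) *ᵥ δ) i
        = ∑ j ∈ ξ ∪ ξstar, U i j * D j := by
      rw [Matrix.mulVec, dotProduct, Finset.univ_eq_attach]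
      rw [← Finset.sum_attach (ξ ∪ ξstar) (fun j => U i j * D j)]
      rfl
    rw [hR]
    rw [Matrix.mul_assoc, Matrix.sub_mulVec, Matrix.one_mulVec, ← Matrix.mulVec_mulVec]
    simp only [Pi.sub_apply]
    rw [← hv, ← hA, ← hB, ← Finset.sum_sub_distrib]
    apply Finset.sum_congr rfl
    intro j _
    rw [hD, mul_sub]
  have hsum : ∑ i, (((1 - colSub U ξ * ((colSub U ξ)ᵀ * colSub U ξ)⁻¹ * (colSub U ξ)ᵀ) *ᵥ
      (U *ᵥ β)) i) ^ 2 = ∑ i, ((colSub U (ξ ∪ ξstar) *ᵥ δ) i) ^ 2 :=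
    Finset.sum_congr rfl fun i _ => by rw [hvec i]
  rw [hsum, ← quad_gram]
  have h1 := lambdaMin_le_quad _ hc hmin δ
  refine le_trans ?_ h1
  apply mul_le_mul_of_nonneg_left ?_ hc.le
  have hδsum : ∑ j : {j : Fin p // j ∈ ξ ∪ ξstar}, δ j ^ 2 = ∑ j ∈ ξ ∪ ξstar, D j ^ 2 := by
    rw [Finset.univ_eq_attach, ← Finset.sum_attach (ξ ∪ ξstar) (fun j => D j ^ 2)]
  rw [hδsum]
  have hsub : ξstar \ ξ ⊆ ξ ∪ ξstar :=
    le_trans (Finset.sdiff_subset) (Finset.subset_union_right)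
  refine le_trans (le_of_eq ?_) (Finset.sum_le_sum_of_subset_of_nonneg hsub
    (fun j _ _ => sq_nonneg (D j)))
  apply Finset.sum_congr rfl
  intro j hj
  rw [hD]
  simp only [dif_neg (Finset.mem_sdiff.1 hj).2, sub_zero]
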